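/- Suppose σ_X, σ_Y > 0, κ > 0, r > μ_Y − κσ_Y and r > μ_X − κσ_X, and let c > 0. Then the piecewise function h_c (equal to H₁c on (0, c], H₂c on [c, lc], and H₃c on [lc, ∞)) is strictly convex on (0, ∞), and it satisfies z·h_c′(z) > h_c(z) for every z > lc. -/

import Mathlib

open Real

open Set in
lemma aux_hasDerivAt (α β p q m : ℝ) (hm : 0 < m) {z : ℝ} (hz : 0 < z) :
    HasDerivAt (fun z : ℝ => α * (z / m) ^ p + β * (z / m) ^ q)
      (α * p / m * (z / m) ^ (p - 1) + β * q / m * (z / m) ^ (q - 1)) z := by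
  have hzm : (0:ℝ) < z / m := div_pos hz hm
  have hdm : HasDerivAt (fun z : ℝ => z / m) (1 / m) z := by
    simpa using (hasDerivAt_id z).div_const m
  have h1 : HasDerivAt (fun z : ℝ => (z / m) ^ p) (p * (z / m) ^ (p - 1) * (1 / m)) z := by
    have := (Real.hasDerivAt_rpow_const (p := p) (Or.inl hzm.ne')).comp z hdm
    exact this
  have h2 : HasDerivAt (fun z : ℝ => (z / m) ^ q) (q * (z / m) ^ (q - 1) * (1 / m)) z := by
    have := (Real.hasDerivAt_rpow_const (p := q) (Or.inl hzm.ne')).comp z hdm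
    exact this
  have h3 := (h1.const_mul α).add (h2.const_mul β)
  exact h3.congr_deriv (by ring)

lemma aux_strictMonoOn (α β p q m : ℝ) (hm : 0 < m) {S : Set ℝ} (hS : Convex ℝ S)
    (hsub : S ⊆ Set.Ioi 0)
    (hpos : ∀ z ∈ interior S,
      0 < α * p / m * (z / m) ^ (p - 1) + β * q / m * (z / m) ^ (q - 1)) :
    StrictMonoOn (fun z : ℝ => α * (z / m) ^ p + β * (z / m) ^ q) S := by
  apply strictMonoOn_of_deriv_pos hS
  · intro z hz
    exact (aux_hasDerivAt α β p q m hm (hsub hz)).continuousAt.continuousWithinAt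
  · intro z hz
    rw [(aux_hasDerivAt α β p q m hm (hsub (interior_subset hz))).deriv]
    exact hpos z hz

lemma alg1 (ψ2 φ2 X : ℝ) (h2n : φ2 < 0) (h2p : 1 < ψ2) :
    ψ2 / (ψ2 - φ2) * X - φ2 / (ψ2 - φ2) * (X * (ψ2 * (1 - φ2) / (φ2 * (1 - ψ2)))) =
      ψ2 / (ψ2 - 1) * X := by
  have h1 : φ2 ≠ 0 := ne_of_lt h2n
  have h2 : (1:ℝ) - ψ2 ≠ 0 := by intro hh; linarith
  have h3 : ψ2 - φ2 ≠ 0 := by intro hh; linarith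
  have h4 : ψ2 - 1 ≠ 0 := by intro hh; linarith
  field_simp
  ring

lemma alg2 (ψ2 φ2 ψ3 φ3 Y l c : ℝ) (h2n : φ2 < 0) (h2p : 1 < ψ2) (hs3 : 0 < ψ3 - φ3)
    (hl : 0 < l) (hc : 0 < c) :
    ψ2 / (ψ2 - φ2) * φ2 / c * Y +
      -(φ2 / (ψ2 - φ2)) * ψ2 / c * (Y * (ψ2 * (1 - φ2) / (φ2 * (1 - ψ2)))) =
    ψ2 / (ψ2 - 1) * (Y * l) * ((1 - φ3) / (ψ3 - φ3)) * ψ3 / (l * c) +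
      ψ2 / (ψ2 - 1) * (Y * l) * ((ψ3 - 1) / (ψ3 - φ3)) * φ3 / (l * c) := by
  have h1 : φ2 ≠ 0 := ne_of_lt h2n
  have h2 : (1:ℝ) - ψ2 ≠ 0 := by intro hh; linarith
  have h3 : ψ2 - φ2 ≠ 0 := by intro hh; linarith
  have h4 : ψ2 - 1 ≠ 0 := by intro hh; linarith
  have h5 : ψ3 - φ3 ≠ 0 := ne_of_gt hs3
  field_simp
  ring


set_option maxHeartbeats 2000000 in
open Set in
/-- The piecewise harmonic function `h_c` is strictly convex on
`(0, ∞)` and satisfies `z·h_c′(z) > h_c(z)` for every `z > lc`. -/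
theorem h_c_strictly_convex (μX μY σX σY κ r c : ℝ)
    (hσX : 0 < σX) (hσY : 0 < σY) (hκ : 0 < κ)
    (hr1 : μY - κ * σY < r) (hr2 : μX - κ * σX < r) (hc : 0 < c)
    (ψ1 φ1 ψ2 φ2 ψ3 φ3 : ℝ)
    (hψ1 : 1 / 2 * (σX ^ 2 + σY ^ 2) * ψ1 * (ψ1 - 1) + (μX - μY + κ * (σX + σY)) * ψ1 +
      μY - κ * σY - r = 0)
    (hφ1 : 1 / 2 * (σX ^ 2 + σY ^ 2) * φ1 * (φ1 - 1) + (μX - μY + κ * (σX + σY)) * φ1 +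
      μY - κ * σY - r = 0)
    (hord1 : φ1 < 0 ∧ 0 < ψ1)
    (hψ2 : 1 / 2 * (σX ^ 2 + σY ^ 2) * ψ2 * (ψ2 - 1) + (μX - μY - κ * (σX - σY)) * ψ2 +
      μY - κ * σY - r = 0)
    (hφ2 : 1 / 2 * (σX ^ 2 + σY ^ 2) * φ2 * (φ2 - 1) + (μX - μY - κ * (σX - σY)) * φ2 +
      μY - κ * σY - r = 0)
    (hord2 : φ2 < 0 ∧ 1 < ψ2)
    (hψ3 : 1 / 2 * (σX ^ 2 + σY ^ 2) * ψ3 * (ψ3 - 1) + (μX - μY - κ * (σX + σY)) * ψ3 +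
      μY + κ * σY - r = 0)
    (hφ3 : 1 / 2 * (σX ^ 2 + σY ^ 2) * φ3 * (φ3 - 1) + (μX - μY - κ * (σX + σY)) * φ3 +
      μY + κ * σY - r = 0)
    (hord3 : φ3 < 1 ∧ 1 < ψ3)
    (l : ℝ) (hl : l = (ψ2 * (1 - φ2) / (φ2 * (1 - ψ2))) ^ (1 / (ψ2 - φ2)))
    (H1 H2 H3 h : ℝ → ℝ)
    (hH1 : H1 = fun z : ℝ =>
      ψ1 / (ψ1 - φ1) * (z / c) ^ φ1 - φ1 / (ψ1 - φ1) * (z / c) ^ ψ1)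
    (hH2 : H2 = fun z : ℝ =>
      ψ2 / (ψ2 - φ2) * (z / c) ^ φ2 - φ2 / (ψ2 - φ2) * (z / c) ^ ψ2)
    (hH3 : H3 = fun z : ℝ =>
      ψ2 / (ψ2 - 1) * l ^ φ2 *
        ((1 - φ3) / (ψ3 - φ3) * (z / (l * c)) ^ ψ3 +
          (ψ3 - 1) / (ψ3 - φ3) * (z / (l * c)) ^ φ3))
    (hh : h = fun z : ℝ => if z ≤ c then H1 z else if z ≤ l * c then H2 z else H3 z) :
    StrictConvexOn ℝ (Set.Ioi (0 : ℝ)) h ∧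
    (∀ z : ℝ, l * c < z → h z < z * deriv h z) := by
  obtain ⟨h1n, h1p⟩ := hord1
  obtain ⟨h2n, h2p⟩ := hord2
  obtain ⟨h3a, h3b⟩ := hord3
  have hs1 : (0:ℝ) < ψ1 - φ1 := by linarith
  have hs2 : (0:ℝ) < ψ2 - φ2 := by linarith
  have hs3 : (0:ℝ) < ψ3 - φ3 := by linarith
  have hbden : (0:ℝ) < φ2 * (1 - ψ2) := mul_pos_of_neg_of_neg h2n (by linarith)
  have hbpos : (0:ℝ) < ψ2 * (1 - φ2) / (φ2 * (1 - ψ2)) :=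
    div_pos (mul_pos (by linarith) (by linarith)) hbden
  have hb1 : (1:ℝ) < ψ2 * (1 - φ2) / (φ2 * (1 - ψ2)) := by
    rw [lt_div_iff₀ hbden]; ring_nf; nlinarith [mul_pos (show (0:ℝ) < ψ2 - φ2 by linarith) (show (0:ℝ) < 1 by norm_num)]
  have hl0 : 0 < l := by rw [hl]; exact rpow_pos_of_pos hbpos _
  have hl1 : 1 < l := by
    rw [hl]; exact (one_lt_rpow_iff_of_pos hbpos).2 (Or.inl ⟨hb1, by positivity⟩)
  have hlc : c < l * c := by have := mul_lt_mul_of_pos_right hl1 hc; rwa [one_mul] at this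
  have hlc0 : 0 < l * c := lt_trans hc hlc
  have hlb : l ^ (ψ2 - φ2) = ψ2 * (1 - φ2) / (φ2 * (1 - ψ2)) := by
    rw [hl, ← Real.rpow_mul hbpos.le, one_div, inv_mul_cancel₀ hs2.ne', Real.rpow_one]
  set K := ψ2 / (ψ2 - 1) * l ^ φ2 with hK
  have hK0 : 0 < K := by
    rw [hK]; exact mul_pos (div_pos (by linarith) (by linarith)) (rpow_pos_of_pos hl0 _)
  -- rewritten forms of the H functions
  have hH1F : H1 = fun z : ℝ => (ψ1/(ψ1-φ1)) * (z/c)^φ1 + (-(φ1/(ψ1-φ1))) * (z/c)^ψ1 := by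
    rw [hH1]; funext z; ring
  have hH2F : H2 = fun z : ℝ => (ψ2/(ψ2-φ2)) * (z/c)^φ2 + (-(φ2/(ψ2-φ2))) * (z/c)^ψ2 := by
    rw [hH2]; funext z; ring
  have hH3F : H3 = fun z : ℝ => (K*((1-φ3)/(ψ3-φ3))) * (z/(l*c))^ψ3 +
      (K*((ψ3-1)/(ψ3-φ3))) * (z/(l*c))^φ3 := by
    rw [hH3]; funext z; ring
  -- derivative functions
  set D1 : ℝ → ℝ := fun z =>
    (ψ1/(ψ1-φ1)) * φ1 / c * (z/c)^(φ1-1) + (-(φ1/(ψ1-φ1))) * ψ1 / c * (z/c)^(ψ1-1) with hD1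
  set D2 : ℝ → ℝ := fun z =>
    (ψ2/(ψ2-φ2)) * φ2 / c * (z/c)^(φ2-1) + (-(φ2/(ψ2-φ2))) * ψ2 / c * (z/c)^(ψ2-1) with hD2
  set D3 : ℝ → ℝ := fun z =>
    (K*((1-φ3)/(ψ3-φ3))) * ψ3 / (l*c) * (z/(l*c))^(ψ3-1) +
    (K*((ψ3-1)/(ψ3-φ3))) * φ3 / (l*c) * (z/(l*c))^(φ3-1) with hD3
  have hd1 : ∀ z : ℝ, 0 < z → HasDerivAt H1 (D1 z) z := by
    intro z hz; rw [hH1F, hD1]; exact aux_hasDerivAt _ _ _ _ _ hc hz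
  have hd2 : ∀ z : ℝ, 0 < z → HasDerivAt H2 (D2 z) z := by
    intro z hz; rw [hH2F, hD2]; exact aux_hasDerivAt _ _ _ _ _ hc hz
  have hd3 : ∀ z : ℝ, 0 < z → HasDerivAt H3 (D3 z) z := by
    intro z hz; rw [hH3F, hD3]; exact aux_hasDerivAt _ _ _ _ _ hlc0 hz
  -- junction values
  have vH1c : H1 c = 1 := by
    rw [hH1]; simp only [div_self hc.ne', Real.one_rpow]; field_simp
  have vH2c : H2 c = 1 := by
    rw [hH2]; simp only [div_self hc.ne', Real.one_rpow]; field_simp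
  have hlcc : l * c / c = l := by field_simp
  have hrw2 : l ^ ψ2 = l ^ φ2 * (ψ2 * (1 - φ2) / (φ2 * (1 - ψ2))) := by
    rw [← hlb, ← Real.rpow_add hl0]; ring_nf
  have vH2lc : H2 (l*c) = K := by
    simp only [hH2, hlcc]
    rw [hrw2, hK]
    exact alg1 _ _ _ h2n h2p
  have vH3lc : H3 (l*c) = K := by
    simp only [hH3, div_self hlc0.ne', Real.one_rpow]
    field_simp
    ring
  have dc1 : D1 c = 0 := by
    simp only [hD1, div_self hc.ne', Real.one_rpow]; ring
  have dc2 : D2 c = 0 := by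
    simp only [hD2, div_self hc.ne', Real.one_rpow]; ring
  have hrw2' : l ^ (ψ2 - 1) = l ^ (φ2 - 1) * (ψ2 * (1 - φ2) / (φ2 * (1 - ψ2))) := by
    rw [← hlb, ← Real.rpow_add hl0]; ring_nf
  have hrw3 : l ^ φ2 = l ^ (φ2 - 1) * l := by
    have h := Real.rpow_add hl0 (φ2 - 1) 1
    rw [Real.rpow_one, show φ2 - 1 + 1 = φ2 by ring] at h
    exact h
  have dlc : D2 (l*c) = D3 (l*c) := by
    simp only [hD2, hD3, hlcc, div_self hlc0.ne', Real.one_rpow, mul_one]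
    rw [hrw2', hK, hrw3]
    exact alg2 _ _ _ _ _ _ _ h2n h2p hs3 hl0 hc
  have hcne : c ≠ 0 := hc.ne'
  have hlcne : l * c ≠ 0 := hlc0.ne'
  have hs1ne : ψ1 - φ1 ≠ 0 := hs1.ne'
  have hs2ne : ψ2 - φ2 ≠ 0 := hs2.ne'
  have hs3ne : ψ3 - φ3 ≠ 0 := hs3.ne'
  -- strict monotonicity of the derivative pieces
  have M1 : StrictMonoOn D1 (Ioc 0 c) := by
    rw [hD1]
    apply aux_strictMonoOn _ _ _ _ _ hc (convex_Ioc 0 c) (fun x hx => hx.1)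
    intro z hz
    rw [interior_Ioc] at hz
    obtain ⟨hz0, hzc⟩ := hz
    have hu0 : 0 < z / c := div_pos hz0 hc
    have hu1 : z / c ≤ 1 := by rw [div_le_one hc]; exact hzc.le
    have hXY : (z/c)^(ψ1-1-1) ≤ (z/c)^(φ1-1-1) :=
      Real.rpow_le_rpow_of_exponent_ge hu0 hu1 (by linarith)
    have hY : 0 < (z/c)^(ψ1-1-1) := Real.rpow_pos_of_pos hu0 _
    have heq : (ψ1/(ψ1-φ1))*φ1/c*(φ1-1)/c*(z/c)^(φ1-1-1) +
        (-(φ1/(ψ1-φ1)))*ψ1/c*(ψ1-1)/c*(z/c)^(ψ1-1-1)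
        = (-(ψ1*φ1)) * ((1-φ1)*((z/c)^(φ1-1-1) - (z/c)^(ψ1-1-1)) + (ψ1-φ1)*(z/c)^(ψ1-1-1))
          / ((ψ1-φ1)*c^2) := by
      field_simp
      ring
    rw [heq]
    apply div_pos _ (by positivity)
    have t1 : 0 ≤ (1-φ1)*((z/c)^(φ1-1-1) - (z/c)^(ψ1-1-1)) :=
      mul_nonneg (by linarith) (by linarith)
    have t2 : 0 < (ψ1-φ1)*(z/c)^(ψ1-1-1) := mul_pos hs1 hY
    have t3 : 0 < -(ψ1*φ1) := by
      have := mul_pos h1p (neg_pos.2 h1n); linarith [this]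
    exact mul_pos t3 (by linarith)
  have M2 : StrictMonoOn D2 (Icc c (l*c)) := by
    rw [hD2]
    apply aux_strictMonoOn _ _ _ _ _ hc (convex_Icc _ _) (fun x hx => lt_of_lt_of_le hc hx.1)
    intro z hz
    rw [interior_Icc] at hz
    have hz0 : 0 < z := lt_trans hc hz.1
    have hu0 : 0 < z / c := div_pos hz0 hc
    have hX : 0 < (z/c)^(φ2-1-1) := Real.rpow_pos_of_pos hu0 _
    have hY : 0 < (z/c)^(ψ2-1-1) := Real.rpow_pos_of_pos hu0 _
    have heq : (ψ2/(ψ2-φ2))*φ2/c*(φ2-1)/c*(z/c)^(φ2-1-1) +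
        (-(φ2/(ψ2-φ2)))*ψ2/c*(ψ2-1)/c*(z/c)^(ψ2-1-1)
        = (-(ψ2*φ2)) * ((1-φ2)*(z/c)^(φ2-1-1) + (ψ2-1)*(z/c)^(ψ2-1-1))
          / ((ψ2-φ2)*c^2) := by
      field_simp
      ring
    rw [heq]
    apply div_pos _ (by positivity)
    have t1 : 0 < (1-φ2)*(z/c)^(φ2-1-1) := mul_pos (by linarith) hX
    have t2 : 0 < (ψ2-1)*(z/c)^(ψ2-1-1) := mul_pos (by linarith) hY
    have t3 : 0 < -(ψ2*φ2) := by
      have := mul_pos (show (0:ℝ) < ψ2 by linarith) (neg_pos.2 h2n); linarith [this]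
    exact mul_pos t3 (by linarith)
  have M3 : StrictMonoOn D3 (Ici (l*c)) := by
    rw [hD3]
    apply aux_strictMonoOn _ _ _ _ _ hlc0 (convex_Ici _) (fun x hx => lt_of_lt_of_le hlc0 hx)
    intro z hz
    rw [interior_Ici] at hz
    have hu1 : 1 < z / (l*c) := (one_lt_div hlc0).2 hz
    have hu0 : 0 < z / (l*c) := lt_trans one_pos hu1
    have hYX : (z/(l*c))^(φ3-1-1) ≤ (z/(l*c))^(ψ3-1-1) :=
      Real.rpow_le_rpow_of_exponent_le hu1.le (by linarith)
    have hY : 0 < (z/(l*c))^(φ3-1-1) := Real.rpow_pos_of_pos hu0 _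
    have heq : (K*((1-φ3)/(ψ3-φ3)))*ψ3/(l*c)*(ψ3-1)/(l*c)*(z/(l*c))^(ψ3-1-1) +
        (K*((ψ3-1)/(ψ3-φ3)))*φ3/(l*c)*(φ3-1)/(l*c)*(z/(l*c))^(φ3-1-1)
        = K*(ψ3-1)*(1-φ3) *
            (ψ3*((z/(l*c))^(ψ3-1-1) - (z/(l*c))^(φ3-1-1)) + (ψ3-φ3)*(z/(l*c))^(φ3-1-1))
          / ((ψ3-φ3)*(l*c)^2) := by
      field_simp
      ring
    rw [heq]
    apply div_pos _ (by positivity)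
    have t1 : 0 ≤ ψ3*((z/(l*c))^(ψ3-1-1) - (z/(l*c))^(φ3-1-1)) :=
      mul_nonneg (by linarith) (by linarith)
    have t2 : 0 < (ψ3-φ3)*(z/(l*c))^(φ3-1-1) := mul_pos hs3 hY
    have t3 : 0 < K*(ψ3-1)*(1-φ3) := mul_pos (mul_pos hK0 (by linarith)) (by linarith)
    exact mul_pos t3 (by linarith)
  -- the derivative function of h
  set g : ℝ → ℝ := fun z => if z ≤ c then D1 z else if z ≤ l*c then D2 z else D3 z with hg
  have hgd : ∀ z ∈ Ioi (0:ℝ), HasDerivAt h (g z) z := by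
    intro z hz
    simp only [mem_Ioi] at hz
    rcases lt_trichotomy z c with hzc | hzc | hzc
    · have hgz : g z = D1 z := by simp only [hg]; rw [if_pos hzc.le]
      rw [hgz]
      refine (hd1 z hz).congr_of_eventuallyEq ?_
      filter_upwards [Iio_mem_nhds hzc] with y hy
      simp only [hh]
      rw [if_pos (le_of_lt (mem_Iio.1 hy))]
    · subst hzc
      have hgz : g z = D1 z := by simp only [hg]; rw [if_pos le_rfl]
      rw [hgz]
      have left : HasDerivWithinAt h (D1 z) (Iic z) z := by
        refine ((hd1 z hz).hasDerivWithinAt).congr (fun y hy => ?_) ?_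
        · simp only [hh]; rw [if_pos (mem_Iic.1 hy)]
        · simp only [hh]; rw [if_pos le_rfl]
      have right : HasDerivWithinAt h (D1 z) (Ici z) z := by
        rw [dc1, ← dc2]
        refine ((hd2 z hz).hasDerivWithinAt).congr_of_eventuallyEq ?_ ?_
        · filter_upwards [self_mem_nhdsWithin,
            mem_nhdsWithin_of_mem_nhds (Iio_mem_nhds hlc)] with y hy1 hy2
          simp only [hh]
          by_cases hyc : y ≤ z
          · have hyz : y = z := le_antisymm hyc (mem_Ici.1 hy1)
            rw [if_pos hyc, hyz, vH1c, vH2c]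
          · rw [if_neg hyc, if_pos (le_of_lt (mem_Iio.1 hy2))]
        · simp only [hh]; rw [if_pos le_rfl, vH1c, vH2c]
      have hu := left.union right
      rw [Iic_union_Ici] at hu
      exact hasDerivWithinAt_univ.mp hu
    · rcases lt_trichotomy z (l*c) with hzl | hzl | hzl
      · have hgz : g z = D2 z := by
          simp only [hg]; rw [if_neg (not_le.2 hzc), if_pos hzl.le]
        rw [hgz]
        refine (hd2 z hz).congr_of_eventuallyEq ?_
        filter_upwards [Ioo_mem_nhds hzc hzl] with y hy
        simp only [hh]
        rw [if_neg (not_le.2 (mem_Ioo.1 hy).1), if_pos (mem_Ioo.1 hy).2.le]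
      · subst hzl
        have hgz : g (l*c) = D2 (l*c) := by
          simp only [hg]; rw [if_neg (not_le.2 hlc), if_pos le_rfl]
        rw [hgz]
        have left : HasDerivWithinAt h (D2 (l*c)) (Iic (l*c)) (l*c) := by
          refine ((hd2 _ hlc0).hasDerivWithinAt).congr_of_eventuallyEq ?_ ?_
          · filter_upwards [self_mem_nhdsWithin,
              mem_nhdsWithin_of_mem_nhds (Ioi_mem_nhds hlc)] with y hy1 hy2
            simp only [hh]
            rw [if_neg (not_le.2 (mem_Ioi.1 hy2)), if_pos (mem_Iic.1 hy1)]
          · simp only [hh]; rw [if_neg (not_le.2 hlc), if_pos le_rfl]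
        have right : HasDerivWithinAt h (D2 (l*c)) (Ici (l*c)) (l*c) := by
          rw [dlc]
          refine ((hd3 _ hlc0).hasDerivWithinAt).congr (fun y hy => ?_) ?_
          · simp only [hh]
            have hyc : ¬ y ≤ c := not_le.2 (lt_of_lt_of_le hlc (mem_Ici.1 hy))
            rw [if_neg hyc]
            by_cases hyl : y ≤ l*c
            · have hyz : y = l*c := le_antisymm hyl (mem_Ici.1 hy)
              rw [if_pos hyl, hyz, vH2lc, vH3lc]
            · rw [if_neg hyl]
          · simp only [hh]; rw [if_neg (not_le.2 hlc), if_pos le_rfl, vH2lc, vH3lc]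
        have hu := left.union right
        rw [Iic_union_Ici] at hu
        exact hasDerivWithinAt_univ.mp hu
      · have hgz : g z = D3 z := by
          simp only [hg]; rw [if_neg (not_le.2 hzc), if_neg (not_le.2 hzl)]
        rw [hgz]
        refine (hd3 z hz).congr_of_eventuallyEq ?_
        filter_upwards [Ioi_mem_nhds hzl] with y hy
        simp only [hh]
        rw [if_neg (not_le.2 (lt_trans hlc (mem_Ioi.1 hy))), if_neg (not_le.2 (mem_Ioi.1 hy))]
  have hderiv_eq : ∀ z ∈ Ioi (0:ℝ), deriv h z = g z := fun z hz => (hgd z hz).deriv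
  have hcont : ContinuousOn h (Ioi 0) := fun z hz =>
    (hgd z hz).continuousAt.continuousWithinAt
  -- g is strictly monotone on (0, ∞)
  have hgm : StrictMonoOn g (Ioi 0) := by
    intro x hx y hy hxy
    simp only [mem_Ioi] at hx hy
    simp only [hg]
    by_cases hyc : y ≤ c
    · have hxc : x ≤ c := le_of_lt (lt_of_lt_of_le hxy hyc)
      rw [if_pos hxc, if_pos hyc]
      exact M1 (Set.mem_Ioc.2 ⟨hx, hxc⟩) (Set.mem_Ioc.2 ⟨lt_trans hx hxy, hyc⟩) hxy
    · push_neg at hyc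
      have hyc' : ¬ y ≤ c := not_le.2 hyc
      by_cases hxc : x ≤ c
      · rw [if_pos hxc]
        have e1 : D1 x ≤ D1 c :=
          M1.monotoneOn (Set.mem_Ioc.2 ⟨hx, hxc⟩) (Set.mem_Ioc.2 ⟨hc, le_rfl⟩) hxc
        by_cases hyl : y ≤ l*c
        · rw [if_neg hyc', if_pos hyl]
          calc D1 x ≤ D1 c := e1
            _ = D2 c := by rw [dc1, dc2]
            _ < D2 y := M2 (Set.mem_Icc.2 ⟨le_rfl, hlc.le⟩) (Set.mem_Icc.2 ⟨hyc.le, hyl⟩) hyc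
        · push_neg at hyl
          rw [if_neg hyc', if_neg (not_le.2 hyl)]
          calc D1 x ≤ D1 c := e1
            _ = D2 c := by rw [dc1, dc2]
            _ < D2 (l*c) := M2 (Set.mem_Icc.2 ⟨le_rfl, hlc.le⟩) (Set.mem_Icc.2 ⟨hlc.le, le_rfl⟩) hlc
            _ = D3 (l*c) := dlc
            _ < D3 y := M3 (Set.mem_Ici.2 le_rfl) (Set.mem_Ici.2 hyl.le) hyl
      · push_neg at hxc
        have hxc' : ¬ x ≤ c := not_le.2 hxc
        by_cases hyl : y ≤ l*c
        · have hxl : x ≤ l*c := le_of_lt (lt_of_lt_of_le hxy hyl)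
          rw [if_neg hxc', if_neg hyc', if_pos hxl, if_pos hyl]
          exact M2 (Set.mem_Icc.2 ⟨hxc.le, hxl⟩) (Set.mem_Icc.2 ⟨hyc.le, hyl⟩) hxy
        · push_neg at hyl
          by_cases hxl : x ≤ l*c
          · rw [if_neg hxc', if_neg hyc', if_pos hxl, if_neg (not_le.2 hyl)]
            calc D2 x ≤ D2 (l*c) :=
                M2.monotoneOn (Set.mem_Icc.2 ⟨hxc.le, hxl⟩) (Set.mem_Icc.2 ⟨hlc.le, le_rfl⟩) hxl
              _ = D3 (l*c) := dlc
              _ < D3 y := M3 (Set.mem_Ici.2 le_rfl) (Set.mem_Ici.2 hyl.le) hyl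
          · push_neg at hxl
            rw [if_neg hxc', if_neg hyc', if_neg (not_le.2 hxl), if_neg (not_le.2 hyl)]
            exact M3 (Set.mem_Ici.2 hxl.le) (Set.mem_Ici.2 hyl.le) hxy
  constructor
  · apply StrictMonoOn.strictConvexOn_of_deriv (convex_Ioi 0) hcont
    rw [interior_Ioi]
    intro x hx y hy hxy
    rw [hderiv_eq x hx, hderiv_eq y hy]
    exact hgm hx hy hxy
  · intro z hz
    have hz0 : 0 < z := lt_trans hlc0 hz
    have hzc : ¬ z ≤ c := not_le.2 (lt_trans hlc hz)
    have hzl : ¬ z ≤ l*c := not_le.2 hz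
    have e1 : h z = H3 z := by simp only [hh]; rw [if_neg hzc, if_neg hzl]
    have e2 : deriv h z = D3 z := by
      rw [hderiv_eq z (Set.mem_Ioi.2 hz0)]
      simp only [hg]; rw [if_neg hzc, if_neg hzl]
    rw [e1, e2]
    simp only [hH3F, hD3]
    have hu1 : 1 < z / (l*c) := (one_lt_div hlc0).2 hz
    have hu0 : 0 < z / (l*c) := lt_trans one_pos hu1
    have r1 : (z/(l*c))^ψ3 = (z/(l*c)) * (z/(l*c))^(ψ3-1) := by
      have hr := Real.rpow_add hu0 1 (ψ3-1)
      rw [Real.rpow_one, show (1:ℝ)+(ψ3-1) = ψ3 by ring] at hr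
      exact hr
    have r2 : (z/(l*c))^φ3 = (z/(l*c)) * (z/(l*c))^(φ3-1) := by
      have hr := Real.rpow_add hu0 1 (φ3-1)
      rw [Real.rpow_one, show (1:ℝ)+(φ3-1) = φ3 by ring] at hr
      exact hr
    have eR : z * ((K*((1-φ3)/(ψ3-φ3)))*ψ3/(l*c)*(z/(l*c))^(ψ3-1) +
        (K*((ψ3-1)/(ψ3-φ3)))*φ3/(l*c)*(z/(l*c))^(φ3-1))
        = (K*((1-φ3)/(ψ3-φ3)))*ψ3*(z/(l*c))^ψ3 +
          (K*((ψ3-1)/(ψ3-φ3)))*φ3*(z/(l*c))^φ3 := by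
      rw [r1, r2]
      field_simp
    rw [eR]
    have hUV : (z/(l*c))^φ3 < (z/(l*c))^ψ3 :=
      Real.rpow_lt_rpow_of_exponent_lt hu1 (by linarith)
    have key : 0 < K * ((1-φ3)*(ψ3-1)/(ψ3-φ3)) * ((z/(l*c))^ψ3 - (z/(l*c))^φ3) :=
      mul_pos (mul_pos hK0 (div_pos (mul_pos (by linarith) (by linarith)) hs3)) (by linarith)
    have heq2 : (K*((1-φ3)/(ψ3-φ3)))*ψ3*(z/(l*c))^ψ3 + (K*((ψ3-1)/(ψ3-φ3)))*φ3*(z/(l*c))^φ3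
        - ((K*((1-φ3)/(ψ3-φ3)))*(z/(l*c))^ψ3 + (K*((ψ3-1)/(ψ3-φ3)))*(z/(l*c))^φ3)
        = K * ((1-φ3)*(ψ3-1)/(ψ3-φ3)) * ((z/(l*c))^ψ3 - (z/(l*c))^φ3) := by
      ring
    linarith [key, heq2]
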